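/- Fix an integer n ≥ 1 and positive reals a_1,…,a_n, b_1,…,b_n. With L_n(z) = Σ_{i=1}^n [ (1−z)b_i·𝟙((1−z)b_i < z a_i) + z a_i·𝟙((1−z)b_i ≥ z a_i) ], U_n⁺(z) = max( Σ_{i=1}^n a_i·𝟙(a_i z ≤ b_i(1−z)), Σ_{i=1}^n b_i·𝟙(a_i z > b_i(1−z)) ), and U_n⁻(z) = max( Σ_{i=1}^n a_i·𝟙(−a_i z ≤ b_i(−1+z)), Σ_{i=1}^n b_i·𝟙(−a_i z > b_i(−1+z)) ), one has max_{z ∈ [0,1]} L_n(z) ≤ min_{z ∈ [0,1]} min(U_n⁺(z), U_n⁻(z)). -/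

import Mathlib

open Finset in
private lemma L_split (n : ℕ) (a b : Fin n → ℝ)
    (ha : ∀ i, 0 < a i) (hb : ∀ i, 0 < b i) (z : ℝ) (hz0 : 0 ≤ z) (hz1 : z ≤ 1)
    (p : Fin n → Prop) [DecidablePred p] :
    ∑ i, min (z * a i) ((1 - z) * b i) ≤
      max (∑ i ∈ univ.filter p, a i) (∑ i ∈ univ.filter (fun i => ¬ p i), b i) := by
  set A := ∑ i ∈ univ.filter p, a i with hA
  set B := ∑ i ∈ univ.filter (fun i => ¬ p i), b i with hB
  have hstep : ∑ i, min (z * a i) ((1 - z) * b i) ≤ z * A + (1 - z) * B := by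
    rw [hA, hB, Finset.mul_sum, Finset.mul_sum,
      ← Finset.sum_filter_add_sum_filter_not Finset.univ p
        (fun i => min (z * a i) ((1 - z) * b i))]
    apply add_le_add
    · exact Finset.sum_le_sum fun i _ => min_le_left _ _
    · exact Finset.sum_le_sum fun i _ => min_le_right _ _
  have hAle : A ≤ max A B := le_max_left _ _
  have hBle : B ≤ max A B := le_max_right _ _
  nlinarith [hstep, hAle, hBle]

open Finset in
private lemma sum_ite_eq (n : ℕ) (c : Fin n → ℝ) (p : Fin n → Prop) [DecidablePred p] :
    ∑ i, c i * (if p i then (1:ℝ) else 0) = ∑ i ∈ univ.filter p, c i := by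
  rw [Finset.sum_filter]
  exact Finset.sum_congr rfl fun i _ => by by_cases h : p i <;> simp [h]

/-- in the warm-up two-period setting, the optimal direct-control value
`max_{z ∈ [0,1]} L_n(z)` is at most the optimal pricing value
`min_{z ∈ [0,1]} min(U_n⁺(z), U_n⁻(z))`. -/
theorem direct_le_pricing_warmup (n : ℕ) (hn : 1 ≤ n) (a b : Fin n → ℝ)
    (ha : ∀ i, 0 < a i) (hb : ∀ i, 0 < b i) :
    sSup ((fun z : ℝ => ∑ i,
        ((1 - z) * b i * (if (1 - z) * b i < z * a i then 1 else 0) +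
          z * a i * (if (1 - z) * b i ≥ z * a i then 1 else 0))) '' Set.Icc (0 : ℝ) 1) ≤
      sInf ((fun z : ℝ => min
          (max (∑ i, a i * (if a i * z ≤ b i * (1 - z) then 1 else 0))
               (∑ i, b i * (if a i * z > b i * (1 - z) then 1 else 0)))
          (max (∑ i, a i * (if -(a i * z) ≤ b i * (-1 + z) then 1 else 0))
               (∑ i, b i * (if -(a i * z) > b i * (-1 + z) then 1 else 0)))) ''
        Set.Icc (0 : ℝ) 1) := by
  have hLmin : ∀ z : ℝ, (∑ i,
      ((1 - z) * b i * (if (1 - z) * b i < z * a i then 1 else 0) +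
        z * a i * (if (1 - z) * b i ≥ z * a i then 1 else 0))) =
      ∑ i, min (z * a i) ((1 - z) * b i) := by
    intro z
    refine Finset.sum_congr rfl fun i _ => ?_
    by_cases h : (1 - z) * b i < z * a i
    · rw [if_pos h, if_neg (not_le.mpr h), min_eq_right h.le]; ring
    · rw [if_neg h, if_pos (not_lt.mp h), min_eq_left (not_lt.mp h)]; ring
  -- key pointwise inequality
  have key : ∀ z ∈ Set.Icc (0:ℝ) 1, ∀ w ∈ Set.Icc (0:ℝ) 1,
      (∑ i, ((1 - z) * b i * (if (1 - z) * b i < z * a i then 1 else 0) +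
        z * a i * (if (1 - z) * b i ≥ z * a i then 1 else 0))) ≤
      min (max (∑ i, a i * (if a i * w ≤ b i * (1 - w) then 1 else 0))
               (∑ i, b i * (if a i * w > b i * (1 - w) then 1 else 0)))
          (max (∑ i, a i * (if -(a i * w) ≤ b i * (-1 + w) then 1 else 0))
               (∑ i, b i * (if -(a i * w) > b i * (-1 + w) then 1 else 0))) := by
    intro z hz w hw
    rw [hLmin]
    refine le_min ?_ ?_
    · have := L_split n a b ha hb z hz.1 hz.2 (fun i => a i * w ≤ b i * (1 - w))
      rw [sum_ite_eq n a (fun i => a i * w ≤ b i * (1 - w)),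
        sum_ite_eq n b (fun i => a i * w > b i * (1 - w))]
      convert this using 3
      · ext i; simp [not_le]
      · ext i; simp [not_le]
    · have := L_split n a b ha hb z hz.1 hz.2 (fun i => -(a i * w) ≤ b i * (-1 + w))
      rw [sum_ite_eq n a (fun i => -(a i * w) ≤ b i * (-1 + w)),
        sum_ite_eq n b (fun i => -(a i * w) > b i * (-1 + w))]
      convert this using 3
      · ext i; simp [not_le]
      · ext i; simp [not_le]
  have hne : ((0:ℝ)) ∈ Set.Icc (0:ℝ) 1 := by constructor <;> norm_num
  refine le_csInf (Set.Nonempty.image _ ⟨0, hne⟩) ?_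
  rintro y ⟨w, hw, rfl⟩
  refine Real.sSup_le ?_ ?_
  · rintro x ⟨z, hz, rfl⟩
    exact key z hz w hw
  · -- 0 ≤ U(w)
    refine le_min ?_ ?_ <;>
    · refine le_trans ?_ (le_max_left _ _)
      refine Finset.sum_nonneg fun i _ => ?_
      have := (ha i).le
      positivity
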